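/- For c_L(α) = c₁ sin(2α) and c_D(α) = c₀ + 2c₁ sin²(α), the condition (c_D'' − 2c_L') sin(α+δ) + (c_L'' + 2c_D') cos(α+δ) = 0 holds identically for all α and all δ; moreover with λ(α) = c_L'(α) cos(α+δ) + c_D'(α) sin(α+δ) = 2c₁ cos(α−δ), one obtains c̄_L(α) := c_L(α) − λ(α) sin(α+δ) = −c₁ sin(2δ) and c̄_D(α) := c_D(α) + λ(α) cos(α+δ) = c₀ + 2c₁ cos²(δ), both constant in α. -/

import Mathlib

open Real

lemma dL (c₁ : ℝ) : deriv (fun α : ℝ => c₁ * sin (2 * α)) = fun α => 2 * c₁ * cos (2 * α) := by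
  funext x
  have : HasDerivAt (fun α : ℝ => c₁ * sin (2 * α)) (2 * c₁ * cos (2 * x)) x := by
    have h := ((hasDerivAt_id x).const_mul (2:ℝ)).sin.const_mul c₁
    refine h.congr_deriv ?_
    simp [id_eq]; ring
  exact this.deriv

lemma dD (c₀ c₁ : ℝ) : deriv (fun α : ℝ => c₀ + 2 * c₁ * (sin α) ^ 2) = fun α => 2 * c₁ * (2 * sin α * cos α) := by
  funext x
  have : HasDerivAt (fun α : ℝ => c₀ + 2 * c₁ * (sin α) ^ 2) (2 * c₁ * (2 * sin x * cos x)) x := by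
    have h := (((hasDerivAt_sin x).pow 2).const_mul (2*c₁)).const_add c₀
    refine h.congr_deriv ?_
    norm_num
  exact this.deriv

lemma dL2 (c₁ : ℝ) : deriv (fun α : ℝ => 2 * c₁ * cos (2 * α)) = fun α => -(4 * c₁ * sin (2 * α)) := by
  funext x
  have : HasDerivAt (fun α : ℝ => 2 * c₁ * cos (2 * α)) (-(4 * c₁ * sin (2 * x))) x := by
    have h := ((hasDerivAt_id x).const_mul (2:ℝ)).cos.const_mul (2*c₁)
    refine h.congr_deriv ?_
    simp [id_eq]; ring
  exact this.deriv

lemma dD2 (c₁ : ℝ) : deriv (fun α : ℝ => 2 * c₁ * (2 * sin α * cos α)) = fun α => 2 * c₁ * (2 * (cos α ^ 2 - sin α ^ 2)) := by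
  funext x
  have : HasDerivAt (fun α : ℝ => 2 * c₁ * (2 * sin α * cos α)) (2 * c₁ * (2 * (cos x ^ 2 - sin x ^ 2))) x := by
    have h := ((((hasDerivAt_sin x).const_mul (2:ℝ)).mul (hasDerivAt_cos x)).const_mul (2*c₁))
    refine h.congr_deriv ?_
    ring
  exact this.deriv

/-- Proposition 1 i): the flat-plate-like model `c_L = c₁ sin 2α`,
`c_D = c₀ + 2c₁ sin²α` satisfies the spherical-equivalency condition for all
`δ`, with `λ(α) = 2c₁ cos(α−δ)` and constant transformed coefficients. -/
theorem flat_plate_spherical_equivalency (c₀ c₁ : ℝ) :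
    let cL : ℝ → ℝ := fun α => c₁ * sin (2 * α)
    let cD : ℝ → ℝ := fun α => c₀ + 2 * c₁ * (sin α) ^ 2
    ∀ (δ α : ℝ),
      (deriv (deriv cD) α - 2 * deriv cL α) * sin (α + δ)
        + (deriv (deriv cL) α + 2 * deriv cD α) * cos (α + δ) = 0 ∧
      deriv cL α * cos (α + δ) + deriv cD α * sin (α + δ) = 2 * c₁ * cos (α - δ) ∧
      cL α - (2 * c₁ * cos (α - δ)) * sin (α + δ) = - c₁ * sin (2 * δ) ∧
      cD α + (2 * c₁ * cos (α - δ)) * cos (α + δ) = c₀ + 2 * c₁ * (cos δ) ^ 2 := by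
  intro cL cD δ α
  have pa := sin_sq_add_cos_sq α
  have pd := sin_sq_add_cos_sq δ
  have hL : deriv cL = fun α => 2 * c₁ * cos (2 * α) := dL c₁
  have hD : deriv cD = fun α => 2 * c₁ * (2 * sin α * cos α) := dD c₀ c₁
  simp only [cL, cD, hL, hD, dL2, dD2]
  refine ⟨?_, ?_, ?_, ?_⟩ <;>
    simp only [sin_add, cos_add, sin_sub, cos_sub, sin_two_mul, cos_two_mul]
  · linear_combination (-4 * c₁ * (sin α * cos δ + cos α * sin δ)) * pa
  · linear_combination (4 * c₁ * cos α * cos δ) * pa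
  · linear_combination (-2 * c₁ * sin α * cos α) * pd + (-2 * c₁ * sin δ * cos δ) * pa
  · linear_combination (2 * c₁ * (cos α ^ 2 - 1)) * pd + (2 * c₁ - 2 * c₁ * sin δ ^ 2) * pa
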